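/- Let H be a subgroup of a finite group G, and suppose H belongs to the class F (factorizable into two subsets for every factorization of its order). If a is a divisor of |G| that divides |H|, then G has a factorization G = AB into subsets with |A| = a and |B| = |G|/a. -/

import Mathlib

def IsFactorization {G : Type*} [Group G] (A B : Finset G) : Prop :=
  ∀ g : G, ∃! p : G × G, p.1 ∈ A ∧ p.2 ∈ B ∧ p.1 * p.2 = g

def InF (G : Type*) [Group G] : Prop :=
  ∀ a b : ℕ, a * b = Nat.card G →
    ∃ A B : Finset G, A.card = a ∧ B.card = b ∧ IsFactorization A B

theorem factorization_of_divisor_of_subgroup {G : Type*} [Group G] [Fintype G]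
    (H : Subgroup G) (hH : InF H) (a : ℕ) (ha : a ∣ Nat.card G)
    (haH : a ∣ Nat.card H) :
    ∃ A B : Finset G, A.card = a ∧ B.card = Nat.card G / a ∧
      IsFactorization A B := by
  classical
  obtain ⟨b, hb⟩ := haH
  obtain ⟨A₀, C₀, hA₀, hC₀, hfac⟩ := hH a b hb.symm
  obtain ⟨T, hT, -⟩ := Subgroup.exists_isComplement_right H 1
  have hT : Subgroup.IsComplement (H : Set G) T := hT
  -- key injectivity lemma
  have key : ∀ (c c' : H) (t t' : G), t ∈ T → t' ∈ T → (c : G) * t = (c' : G) * t' →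
      c = c' ∧ t = t' := by
    intro c c' t t' ht ht' heq
    have := hT.1 (a₁ := ⟨⟨(c : G), c.2⟩, ⟨t, ht⟩⟩)
      (a₂ := ⟨⟨(c' : G), c'.2⟩, ⟨t', ht'⟩⟩) heq
    obtain ⟨h1, h2⟩ := Prod.mk.injEq .. ▸ this
    exact ⟨Subtype.ext (congrArg Subtype.val h1), congrArg Subtype.val h2⟩
  have hTfin : T.Finite := Set.toFinite T
  set Tf : Finset G := hTfin.toFinset with hTf
  have hTmem : ∀ t, t ∈ Tf ↔ t ∈ T := fun t => hTfin.mem_toFinset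
  refine ⟨A₀.image ((↑) : H → G), (C₀ ×ˢ Tf).image (fun p => (p.1 : G) * p.2), ?_, ?_, ?_⟩
  · rw [Finset.card_image_of_injective _ Subtype.coe_injective, hA₀]
  · -- cardinality of B
    have hinj : Set.InjOn (fun p : H × G => (p.1 : G) * p.2) (↑(C₀ ×ˢ Tf) : Set (H × G)) := by
      intro p hp q hq heq
      rw [Finset.mem_coe, Finset.mem_product] at hp hq
      obtain ⟨h1, h2⟩ := key p.1 q.1 p.2 q.2 ((hTmem _).mp hp.2) ((hTmem _).mp hq.2) heq
      exact Prod.ext h1 h2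
    rw [Finset.card_image_of_injOn hinj, Finset.card_product, hC₀]
    have hTcard : Tf.card = H.index := by
      rw [show Tf.card = T.ncard from (Set.ncard_eq_toFinset_card T hTfin).symm,
        ← Nat.card_coe_set_eq]
      exact hT.card_right
    have hGcard : Nat.card G = Nat.card H * H.index := (Subgroup.card_mul_index H).symm
    have ha0 : a ≠ 0 := by
      rintro rfl
      have := Nat.card_pos (α := H)
      omega
    rw [hTcard, hGcard, hb, Nat.mul_assoc, Nat.mul_div_cancel_left _ (Nat.pos_of_ne_zero ha0)]
  · -- factorization property
    intro g
    obtain ⟨⟨h, t⟩, heq, -⟩ := hT.existsUnique g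
    set h' : H := ⟨(h : G), h.2⟩ with hh'
    obtain ⟨⟨x, c⟩, ⟨hx, hc, hxc⟩, huniq⟩ := hfac h'
    have htf : (t : G) ∈ Tf := (hTmem (t : G)).mpr t.2
    refine ⟨((x : G), (c : G) * (t : G)), ⟨Finset.mem_image_of_mem _ hx, ?_, ?_⟩, ?_⟩
    · exact Finset.mem_image.mpr ⟨(c, (t : G)), Finset.mem_product.mpr ⟨hc, htf⟩, rfl⟩
    · have hxc' : (x : G) * c = h := by
        have : ((x * c : H) : G) = (h : G) := congrArg Subtype.val (hxc : x * c = h')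
        push_cast at this; exact this
      rw [← mul_assoc, hxc']
      exact heq
    · rintro ⟨x₁, y₁⟩ ⟨hx₁, hy₁, hprod⟩
      obtain ⟨x', hx', rfl⟩ := Finset.mem_image.mp hx₁
      obtain ⟨⟨c', t'⟩, hct', rfl⟩ := Finset.mem_image.mp hy₁
      obtain ⟨hc', ht'⟩ := Finset.mem_product.mp hct'
      have ht'T : t' ∈ T := (hTmem _).mp ht'
      -- g = (x' * c') * t'
      have hg2 : ((x' * c' : H) : G) * t' = g := by
        push_cast
        rw [mul_assoc]; exact hprod
      -- canonical decomposition
      have hg1 : ((h' : G)) * (t : G) = g := heq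
      obtain ⟨hH1, hH2⟩ := key (x' * c') h' t' t ht'T t.2 (hg2.trans hg1.symm)
      have : ((x', c') : H × H) = (x, c) := huniq (x', c') ⟨hx', hc', hH1⟩
      obtain ⟨h1, h2⟩ := Prod.mk.injEq .. ▸ this
      simp [h1, h2, hH2]
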